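/- Fix $k \ge 1$. With $v_\infty = \sum_{n\ge 1} f_n v_n$ where $v_n = [1, q^n z_2, z_2]$ and $f_n = \frac{(-1)^{n-1} q^{n(n-1)/2}(1-q^{2n}z_1z_2^2)}{(q)_\infty (q^{n+1}z_1z_2^2)_\infty (q)_{n-1}(1 - q^n z_2)}$, one has the fixed-point equation $(A+B)v_\infty = v_\infty$, where $A$ and $B$ are the extremal operators defined below. -/

import Mathlib

namespace Boson

/-- Formal power series in `q = X 0`, `z₁ = X 1`, `z₂ = X 2` over `ℚ`. -/
abbrev R := MvPowerSeries (Fin 3) ℚ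

noncomputable def qv : R := MvPowerSeries.X 0
noncomputable def z1v : R := MvPowerSeries.X 1
noncomputable def z2v : R := MvPowerSeries.X 2

/-- The infinite Pochhammer symbol `(a;q)_∞ = ∏_{j≥0}(1 - a qʲ)`, defined
coefficientwise: when `a` has vanishing constant term the coefficient of any
monomial `d` in the partial products stabilizes as soon as the number of factors
exceeds the total degree of `d`. -/
noncomputable def pochInf (a : R) : R := fun d =>
  MvPowerSeries.coeff (R := ℚ) d
    (∏ j ∈ Finset.range (d 0 + d 1 + d 2 + 1), (1 - a * qv ^ j))

/-- The finite Pochhammer symbol `(q;q)_n = ∏_{j=0}^{n-1}(1 - q^{j+1})`. -/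
noncomputable def pochFin (n : ℕ) : R := ∏ j ∈ Finset.range n, (1 - qv ^ (j + 1))

/-- The formal sum `∑_{n≥1} t n`, defined coefficientwise: applicable when the
`n`-th term is divisible by `q^{n(n-1)/2}`, so that the coefficient of any
monomial `d` in the partial sums stabilizes. -/
noncomputable def sumInf (t : ℕ → R) : R := fun d =>
  MvPowerSeries.coeff (R := ℚ) d (∑ n ∈ Finset.range (d 0 + d 1 + d 2 + 2), t (n + 1))

/-- The scalar part
`f_n = (-1)^{n-1} q^{n(n-1)/2} (1-q^{2n}z₁z₂²) / ((q)_∞ (q^{n+1}z₁z₂²)_∞ (q)_{n-1} (1-qⁿz₂))`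
(inverses are taken in `ℚ[[q,z₁,z₂]]`; every inverted factor has constant term `1`). -/
noncomputable def fn (n : ℕ) : R :=
  (-1 : R) ^ (n - 1) * qv ^ (n * (n - 1) / 2) * (1 - qv ^ (2 * n) * z1v * z2v ^ 2) *
    (pochInf qv * pochInf (qv ^ (n + 1) * z1v * z2v ^ 2) * pochFin (n - 1) *
      (1 - qv ^ n * z2v))⁻¹

/-- The shift `S f_n` of the scalar part `f_n` under `z₂ ↦ q z₂`, written out
explicitly (each occurrence of `z₂` in `f_n` is replaced by `q z₂`). -/
noncomputable def fnS (n : ℕ) : R :=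
  (-1 : R) ^ (n - 1) * qv ^ (n * (n - 1) / 2) * (1 - qv ^ (2 * n + 2) * z1v * z2v ^ 2) *
    (pochInf qv * pochInf (qv ^ (n + 3) * z1v * z2v ^ 2) * pochFin (n - 1) *
      (1 - qv ^ (n + 1) * z2v))⁻¹

/-- The `(i,l)`-component of `A(fₙ vₙ)` (for `vₙ = [1, qⁿz₂, z₂]`), written after
the shift `S : z₂ ↦ qz₂`:
`S( fₙ [1, qⁿz₂, q⁻¹z₂] / ((1-qⁿz₁z₂²)(1-q⁻ⁿ)) )`,
with `1/(1-q⁻ⁿ)` expanded, per the paper's convention, in non-negative powers of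
`qⁿ`, i.e. as `-qⁿ (1-qⁿ)⁻¹`. -/
noncomputable def Aterm (n i l : ℕ) : R :=
  fnS n * (qv ^ (n + 1) * z2v) ^ (l - i) * z2v ^ i *
    (1 - qv ^ (n + 2) * z1v * z2v ^ 2)⁻¹ * (-(qv ^ n)) * (1 - qv ^ n)⁻¹

/-- The `(i,l)`-component of `B(fₙ vₙ)`, written after the shift `S : z₂ ↦ qz₂`:
`S( fₙ (1-qⁿz₂) [1, z₂, q⁻¹z₂] / ((1-qⁿz₁z₂²)(1-qⁿ)(1-z₂)) )`. -/
noncomputable def Bterm (n i l : ℕ) : R :=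
  fnS n * (1 - qv ^ (n + 1) * z2v) *
    ((1 - qv ^ (n + 2) * z1v * z2v ^ 2) * (1 - qv ^ n) * (1 - qv * z2v))⁻¹ *
    (qv * z2v) ^ (l - i) * z2v ^ i

open MvPowerSeries Finset

abbrev wt (d : Fin 3 →₀ ℕ) : ℕ := d 0 + d 1 + d 2

lemma coeff_q_high {d : Fin 3 →₀ ℕ} {m : ℕ} (h : wt d < m) (x : R) :
    MvPowerSeries.coeff (R := ℚ) d (qv ^ m * x) = 0 := by
  classical
  rw [coeff_mul]
  apply Finset.sum_eq_zero
  rintro ⟨p, p'⟩ hp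
  rw [Finset.HasAntidiagonal.mem_antidiagonal] at hp
  rw [qv, coeff_X_pow, if_neg, zero_mul]
  rintro rfl
  have := congrArg (fun f => f (0 : Fin 3)) hp
  simp [Finsupp.single_apply] at this
  unfold wt at h
  omega

lemma coeff_mul_near_one (d : Fin 3 →₀ ℕ) (x y : R)
    (hy : ∀ e : Fin 3 →₀ ℕ, wt e ≤ wt d → MvPowerSeries.coeff (R := ℚ) e y = MvPowerSeries.coeff (R := ℚ) e 1) :
    MvPowerSeries.coeff (R := ℚ) d (x * y) = MvPowerSeries.coeff (R := ℚ) d x := by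
  classical
  conv_rhs => rw [← mul_one x]
  rw [coeff_mul, coeff_mul]
  apply Finset.sum_congr rfl
  rintro ⟨p, p'⟩ hp
  rw [Finset.HasAntidiagonal.mem_antidiagonal] at hp
  have h0 := congrArg (fun f => f (0 : Fin 3)) hp
  have h1 := congrArg (fun f => f (1 : Fin 3)) hp
  have h2 := congrArg (fun f => f (2 : Fin 3)) hp
  simp only [Finsupp.add_apply] at h0 h1 h2
  have : wt p' ≤ wt d := by unfold wt; omega
  rw [hy p' this]

noncomputable def pochF (b : R) (n : ℕ) : R := ∏ j ∈ Finset.range n, (1 - b * qv ^ j)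

lemma coeff_tail_one (b : R) (M : ℕ) (s : Finset ℕ) (hs : ∀ j ∈ s, M ≤ j)
    {e : Fin 3 →₀ ℕ} (he : wt e < M) :
    MvPowerSeries.coeff (R := ℚ) e (∏ j ∈ s, (1 - b * qv ^ j)) = MvPowerSeries.coeff (R := ℚ) e 1 := by
  classical
  induction s using Finset.induction with
  | empty => simp
  | @insert j s' hj ih =>
    rw [Finset.prod_insert hj]
    have hzero : MvPowerSeries.coeff (R := ℚ) e (b * qv ^ j * ∏ x ∈ s', (1 - b * qv ^ x)) = 0 := by
      have : b * qv ^ j * ∏ x ∈ s', (1 - b * qv ^ x) = qv ^ j * (b * ∏ x ∈ s', (1 - b * qv ^ x)) := by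
        ring
      rw [this]
      exact coeff_q_high (lt_of_lt_of_le he (hs j (Finset.mem_insert_self j s'))) _
    have expand : (1 - b * qv ^ j) * ∏ x ∈ s', (1 - b * qv ^ x)
        = ∏ x ∈ s', (1 - b * qv ^ x) - b * qv ^ j * ∏ x ∈ s', (1 - b * qv ^ x) := by ring
    rw [expand, map_sub, hzero, sub_zero]
    exact ih (fun x hx => hs x (Finset.mem_insert_of_mem hx))

lemma coeff_pochInf_eq (b : R) (d : Fin 3 →₀ ℕ) {M : ℕ} (h : wt d < M) :
    MvPowerSeries.coeff (R := ℚ) d (pochInf b) = MvPowerSeries.coeff (R := ℚ) d (pochF b M) := by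
  have base : MvPowerSeries.coeff (R := ℚ) d (pochInf b) = MvPowerSeries.coeff (R := ℚ) d (pochF b (wt d + 1)) := rfl
  rw [base]
  have hsplit : pochF b M = pochF b (wt d + 1) * ∏ j ∈ Finset.Ico (wt d + 1) M, (1 - b * qv ^ j) := by
    unfold pochF
    rw [Finset.range_eq_Ico, Finset.range_eq_Ico]
    exact (Finset.prod_Ico_consecutive (fun j => 1 - b * qv ^ j) (Nat.zero_le _) (by omega : wt d + 1 ≤ M)).symm
  rw [hsplit, coeff_mul_near_one]
  intro e he
  exact coeff_tail_one b (wt d + 1) _ (fun j hj => (Finset.mem_Ico.mp hj).1) (by omega)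

lemma pochInf_step (b : R) : pochInf b = (1 - b) * pochInf (b * qv) := by
  apply MvPowerSeries.ext; intro d
  rw [coeff_pochInf_eq b d (M := wt d + 2) (by omega)]
  have lhs_eq : pochF b (wt d + 2) = (1 - b) * pochF (b * qv) (wt d + 1) := by
    unfold pochF
    rw [Finset.prod_range_succ']
    simp only [pow_zero, mul_one]
    rw [mul_comm]
    congr 1
    apply Finset.prod_congr rfl
    intro j _
    congr 1
    ring
  rw [lhs_eq, coeff_mul, coeff_mul]
  apply Finset.sum_congr rfl
  rintro ⟨p, p'⟩ hp
  rw [Finset.HasAntidiagonal.mem_antidiagonal] at hp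
  have h0 := congrArg (fun f => f (0 : Fin 3)) hp
  have h1 := congrArg (fun f => f (1 : Fin 3)) hp
  have h2 := congrArg (fun f => f (2 : Fin 3)) hp
  simp only [Finsupp.add_apply] at h0 h1 h2
  congr 1
  exact ((coeff_pochInf_eq (b * qv) p' (M := wt d + 1) (by unfold wt; omega))).symm

lemma pochInf_split (b : R) (n : ℕ) : pochInf b = pochF b n * pochInf (b * qv ^ n) := by
  induction n with
  | zero => simp [pochF, pow_zero, mul_one]
  | succ n ih =>
    rw [ih, pochInf_step (b * qv ^ n)]
    rw [show b * qv ^ n * qv = b * qv ^ (n + 1) by ring]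
    rw [show pochF b (n+1) = pochF b n * (1 - b * qv ^ n) from Finset.prod_range_succ _ n]
    ring


noncomputable abbrev ccf : R →+* ℚ := MvPowerSeries.constantCoeff (σ := Fin 3) (R := ℚ)

lemma cc_qv : ccf qv = 0 := by simp [qv]
lemma cc_z1v : ccf z1v = 0 := by simp [z1v]
lemma cc_z2v : ccf z2v = 0 := by simp [z2v]

lemma cc_pochInf (b : R) (hb : ccf b = 0) : ccf (pochInf b) = 1 := by
  have h0 : wt (0 : Fin 3 →₀ ℕ) = 0 := by simp [wt]
  have : MvPowerSeries.coeff (R := ℚ) (0 : Fin 3 →₀ ℕ) (pochInf b)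
      = MvPowerSeries.coeff (R := ℚ) (0 : Fin 3 →₀ ℕ) (pochF b 1) :=
    coeff_pochInf_eq b 0 (by omega)
  rw [← MvPowerSeries.coeff_zero_eq_constantCoeff, this]
  unfold pochF
  rw [MvPowerSeries.coeff_zero_eq_constantCoeff]
  simp [hb]

lemma cc_pochF (b : R) (n : ℕ) (hb : ccf b = 0) : ccf (pochF b n) = 1 := by
  unfold pochF
  rw [map_prod]
  apply Finset.prod_eq_one
  intro j _
  simp [hb]

lemma cc_pochFin (n : ℕ) : ccf (pochFin n) = 1 := by
  unfold pochFin
  rw [map_prod]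
  apply Finset.prod_eq_one
  intro j _
  simp [pow_succ, qv]

lemma inv_mul_inv (x y : R) : x⁻¹ * y⁻¹ = (x * y)⁻¹ := by
  rw [MvPowerSeries.mul_inv_rev, mul_comm]

lemma frac_eq {N1 D1 N2 D2 : R} (h1 : ccf D1 ≠ 0) (h2 : ccf D2 ≠ 0)
    (h : N1 * D2 = N2 * D1) : N1 * D1⁻¹ = N2 * D2⁻¹ := by
  have e1 := MvPowerSeries.mul_inv_cancel D1 h1
  have e2 := MvPowerSeries.mul_inv_cancel D2 h2
  linear_combination D1⁻¹ * D2⁻¹ * h - N1 * D1⁻¹ * e2 + N2 * D2⁻¹ * e1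


lemma tri (n : ℕ) : (n + 2) * (n + 1) / 2 = (n + 1) * n / 2 + (n + 1) := by
  have h : (n + 2) * (n + 1) = (n + 1) * n + (n + 1) * 2 := by ring
  rw [h, Nat.add_mul_div_right _ _ (by norm_num : 0 < 2)]

lemma A_eq (n i l : ℕ) :
    Aterm (n + 1) i l = fn (n + 2) * (qv ^ (n + 2) * z2v) ^ (l - i) * z2v ^ i := by
  have h1 : n + 1 - 1 = n := rfl
  have h2 : n + 2 - 1 = n + 1 := rfl
  have h3 : n + 1 + 3 = n + 4 := by omega
  have h4 : n + 1 + 1 = n + 2 := by omega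
  have h5 : n + 1 + 2 = n + 3 := by omega
  have h6 : 2 * (n + 1) + 2 = 2 * n + 4 := by omega
  have h7 : 2 * (n + 2) = 2 * n + 4 := by omega
  have h8 : n + 2 + 1 = n + 3 := by omega
  have hstep : pochInf (qv ^ (n + 3) * z1v * z2v ^ 2)
      = (1 - qv ^ (n + 3) * z1v * z2v ^ 2) * pochInf (qv ^ (n + 4) * z1v * z2v ^ 2) := by
    rw [pochInf_step, show qv ^ (n + 3) * z1v * z2v ^ 2 * qv = qv ^ (n + 4) * z1v * z2v ^ 2 by ring]
  have hfin : pochFin (n + 1) = pochFin n * (1 - qv ^ (n + 1)) := Finset.prod_range_succ _ n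
  set u : R := pochInf qv * pochInf (qv ^ (n + 4) * z1v * z2v ^ 2) * pochFin n
      * (1 - qv ^ (n + 2) * z2v) with hu
  set v : R := 1 - qv ^ (n + 3) * z1v * z2v ^ 2 with hv
  set w : R := 1 - qv ^ (n + 1) with hw
  set D2 : R := pochInf qv * pochInf (qv ^ (n + 3) * z1v * z2v ^ 2) * pochFin (n + 1)
      * (1 - qv ^ (n + 2) * z2v) with hD2def
  set N1 : R := (-1 : R) ^ n * qv ^ ((n + 1) * n / 2) * (1 - qv ^ (2 * n + 4) * z1v * z2v ^ 2)
      * (qv ^ (n + 2) * z2v) ^ (l - i) * z2v ^ i * (-(qv ^ (n + 1))) with hN1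
  set N2 : R := (-1 : R) ^ (n + 1) * qv ^ ((n + 1) * n / 2 + (n + 1))
      * (1 - qv ^ (2 * n + 4) * z1v * z2v ^ 2)
      * (qv ^ (n + 2) * z2v) ^ (l - i) * z2v ^ i with hN2
  have cQ : ccf (pochInf qv) = 1 := cc_pochInf _ cc_qv
  have cP : ccf (pochInf (qv ^ (n + 4) * z1v * z2v ^ 2)) = 1 :=
    cc_pochInf _ (by simp [qv, z1v, z2v])
  have cP3 : ccf (pochInf (qv ^ (n + 3) * z1v * z2v ^ 2)) = 1 :=
    cc_pochInf _ (by simp [qv, z1v, z2v])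
  have cF : ∀ m, ccf (pochFin m) = 1 := cc_pochFin
  have cZ : ccf ((1 : R) - qv ^ (n + 2) * z2v) = 1 := by simp [qv, z2v]
  have cv : ccf v = 1 := by rw [hv]; simp [qv, z1v, z2v]
  have cw : ccf w = 1 := by rw [hw]; simp [qv, pow_succ]
  have hD1 : ccf (u * v * w) ≠ 0 := by
    rw [map_mul, map_mul, hu, map_mul, map_mul, map_mul, cQ, cP, cF, cZ, cv, cw]; norm_num
  have hD2 : ccf D2 ≠ 0 := by
    rw [hD2def, map_mul, map_mul, map_mul, cQ, cP3, cF, cZ]; norm_num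
  have eA : Aterm (n + 1) i l = N1 * (u * v * w)⁻¹ := by
    unfold Aterm fnS
    simp only [h1, h3, h4, h5, h6]
    rw [← inv_mul_inv (u * v) w, ← inv_mul_inv u v, hN1, hu, hv, hw]
    ring
  have eB : fn (n + 2) * (qv ^ (n + 2) * z2v) ^ (l - i) * z2v ^ i = N2 * D2⁻¹ := by
    unfold fn
    simp only [h2, h7, h8, tri n]
    rw [hN2, hD2def]
    ring
  have hcross : N1 * D2 = N2 * (u * v * w) := by
    rw [hN1, hN2, hD2def, hu, hv, hw, hstep, hfin]
    ring
  rw [eA, eB]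
  exact frac_eq hD1 hD2 hcross


noncomputable def av : R := qv ^ 2 * z1v * z2v ^ 2

noncomputable def Tn (n : ℕ) : R :=
  (-1 : R) ^ n * qv ^ ((n + 1) * n / 2) * pochF av (n + 1) * (pochFin n)⁻¹

noncomputable def C0 : R := (pochInf qv * pochInf av * (1 - qv * z2v))⁻¹

lemma cc_av : ccf av = 0 := by simp [av, qv, z1v, z2v]

lemma B_eq (n i l : ℕ) :
    Bterm (n + 1) i l = (Tn n - Tn (n + 1)) * (C0 * ((qv * z2v) ^ (l - i) * z2v ^ i)) := by
  have h1 : n + 1 - 1 = n := rfl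
  have h3 : n + 1 + 3 = n + 4 := by omega
  have h4 : n + 1 + 1 = n + 2 := by omega
  have h5 : n + 1 + 2 = n + 3 := by omega
  have h6 : 2 * (n + 1) + 2 = 2 * n + 4 := by omega
  have harg : qv ^ (n + 4) * z1v * z2v ^ 2 = av * qv ^ (n + 2) := by unfold av; ring
  have hfin : pochFin (n + 1) = pochFin n * (1 - qv ^ (n + 1)) := Finset.prod_range_succ _ n
  have hpF : pochF av (n + 2) = pochF av (n + 1) * (1 - av * qv ^ (n + 1)) :=
    Finset.prod_range_succ _ (n + 1)
  set u : R := pochInf qv * pochInf (qv ^ (n + 4) * z1v * z2v ^ 2) * pochFin n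
      * (1 - qv ^ (n + 2) * z2v) with hu
  set v : R := 1 - qv ^ (n + 3) * z1v * z2v ^ 2 with hv
  set w : R := 1 - qv ^ (n + 1) with hw
  set y : R := 1 - qv * z2v with hy
  set D2 : R := pochFin (n + 1) * (pochInf qv * pochInf av * (1 - qv * z2v)) with hD2def
  set N1 : R := (-1 : R) ^ n * qv ^ ((n + 1) * n / 2) * (1 - qv ^ (2 * n + 4) * z1v * z2v ^ 2)
      * (1 - qv ^ (n + 2) * z2v) * ((qv * z2v) ^ (l - i) * z2v ^ i) with hN1
  set N2 : R := ((-1 : R) ^ n * qv ^ ((n + 1) * n / 2) * pochF av (n + 1) * (1 - qv ^ (n + 1))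
      - (-1 : R) ^ (n + 1) * qv ^ ((n + 1) * n / 2 + (n + 1)) * pochF av (n + 2))
      * ((qv * z2v) ^ (l - i) * z2v ^ i) with hN2
  have cQ : ccf (pochInf qv) = 1 := cc_pochInf _ cc_qv
  have cP : ccf (pochInf (qv ^ (n + 4) * z1v * z2v ^ 2)) = 1 :=
    cc_pochInf _ (by simp [qv, z1v, z2v])
  have cA : ccf (pochInf av) = 1 := cc_pochInf _ cc_av
  have cF : ∀ m, ccf (pochFin m) = 1 := cc_pochFin
  have cZ : ccf ((1 : R) - qv ^ (n + 2) * z2v) = 1 := by simp [qv, z2v]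
  have cv : ccf v = 1 := by rw [hv]; simp [qv, z1v, z2v]
  have cw : ccf w = 1 := by rw [hw]; simp [qv, pow_succ]
  have cy : ccf y = 1 := by rw [hy]; simp [qv, z2v]
  have hD1 : ccf (u * (v * w * y)) ≠ 0 := by
    rw [map_mul, hu, map_mul, map_mul, map_mul, map_mul, map_mul, cQ, cP, cF, cZ, cv, cw, cy]
    norm_num
  have hD2 : ccf D2 ≠ 0 := by
    rw [hD2def, map_mul, map_mul, map_mul, cF, cQ, cA, ← hy, cy]; norm_num
  have hinv : (pochFin n)⁻¹ = w * (pochFin (n + 1))⁻¹ := by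
    have hne : ccf (pochFin n) ≠ 0 := by rw [cF]; norm_num
    have hne1 : ccf (pochFin (n + 1)) ≠ 0 := by rw [cF]; norm_num
    have := frac_eq (N1 := (1 : R)) (N2 := w) hne hne1 (by rw [hfin, hw]; ring)
    simpa using this
  have eL : Bterm (n + 1) i l = N1 * (u * (v * w * y))⁻¹ := by
    unfold Bterm fnS
    simp only [h1, h3, h4, h5, h6]
    rw [← inv_mul_inv u (v * w * y), hN1, hu, hv, hw, hy]
    ring
  have eR : (Tn n - Tn (n + 1)) * (C0 * ((qv * z2v) ^ (l - i) * z2v ^ i)) = N2 * D2⁻¹ := by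
    unfold Tn C0
    simp only [h4, show (n + 1 + 1) * (n + 1) / 2 = (n + 1) * n / 2 + (n + 1) from by
      rw [h4]; exact tri n]
    rw [hinv, hD2def, ← inv_mul_inv (pochFin (n + 1)) (pochInf qv * pochInf av * (1 - qv * z2v)),
      hN2, ← hy]
    ring
  have hcross : N1 * D2 = N2 * (u * (v * w * y)) := by
    rw [hN1, hN2, hD2def, hu, hv, hw, hy, harg, hfin, hpF,
      pochInf_split av (n + 2), hpF]
    unfold av
    ring
  rw [eL, eR]
  exact frac_eq hD1 hD2 hcross

lemma Tn0 (i l : ℕ) :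
    Tn 0 * (C0 * ((qv * z2v) ^ (l - i) * z2v ^ i))
      = fn 1 * (qv ^ 1 * z2v) ^ (l - i) * z2v ^ i := by
  have harg : qv ^ (1 + 1) * z1v * z2v ^ 2 = av := by unfold av; ring
  have hpF1 : pochF av 1 = 1 - av := by simp [pochF]
  have hpFin0 : pochFin 0 = 1 := Finset.prod_range_zero _
  set D1 : R := pochFin 0 * (pochInf qv * pochInf av * (1 - qv * z2v)) with hD1def
  set D2 : R := pochInf qv * pochInf av * pochFin 0 * (1 - qv ^ 1 * z2v) with hD2def
  set N1 : R := pochF av 1 * ((qv * z2v) ^ (l - i) * z2v ^ i) with hN1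
  set N2 : R := (-1 : R) ^ (1 - 1) * qv ^ (1 * (1 - 1) / 2) * (1 - qv ^ (2 * 1) * z1v * z2v ^ 2)
      * ((qv ^ 1 * z2v) ^ (l - i) * z2v ^ i) with hN2
  have cQ : ccf (pochInf qv) = 1 := cc_pochInf _ cc_qv
  have cA : ccf (pochInf av) = 1 := cc_pochInf _ cc_av
  have cF : ∀ m, ccf (pochFin m) = 1 := cc_pochFin
  have cy : ccf ((1 : R) - qv * z2v) = 1 := by simp [qv, z2v]
  have cz : ccf ((1 : R) - qv ^ 1 * z2v) = 1 := by simp [qv, z2v]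
  have hD1 : ccf D1 ≠ 0 := by
    rw [hD1def, map_mul, map_mul, map_mul, cF, cQ, cA, cy]; norm_num
  have hD2 : ccf D2 ≠ 0 := by
    rw [hD2def, map_mul, map_mul, map_mul, cQ, cA, cF, cz]; norm_num
  have eL : Tn 0 * (C0 * ((qv * z2v) ^ (l - i) * z2v ^ i)) = N1 * D1⁻¹ := by
    unfold Tn C0
    rw [hD1def, ← inv_mul_inv (pochFin 0) (pochInf qv * pochInf av * (1 - qv * z2v)), hN1]
    norm_num
    try ring
  have eR : fn 1 * (qv ^ 1 * z2v) ^ (l - i) * z2v ^ i = N2 * D2⁻¹ := by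
    unfold fn
    rw [hN2, hD2def, harg]
    ring
  have hcross : N1 * D2 = N2 * D1 := by
    rw [hN1, hN2, hD1def, hD2def, hpF1, hpFin0]
    unfold av
    norm_num
    try ring
  rw [eL, eR]
  exact frac_eq hD1 hD2 hcross


lemma half_ge (W : ℕ) : W < (W + 2 + 1) * (W + 2) / 2 := by
  have h : (W + 1) * 2 ≤ (W + 2 + 1) * (W + 2) := by nlinarith
  have := (Nat.le_div_iff_mul_le (by norm_num : 0 < 2)).2 h
  omega

lemma van1 (N i l : ℕ) (d : Fin 3 →₀ ℕ) (h : wt d < (N + 1) * N / 2) :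
    MvPowerSeries.coeff (R := ℚ) d (fn (N + 1) * (qv ^ (N + 1) * z2v) ^ (l - i) * z2v ^ i) = 0 := by
  have e : fn (N + 1) * (qv ^ (N + 1) * z2v) ^ (l - i) * z2v ^ i
      = qv ^ ((N + 1) * N / 2) * ((-1 : R) ^ N * (1 - qv ^ (2 * (N + 1)) * z1v * z2v ^ 2)
          * (pochInf qv * pochInf (qv ^ (N + 1 + 1) * z1v * z2v ^ 2) * pochFin N
              * (1 - qv ^ (N + 1) * z2v))⁻¹
          * ((qv ^ (N + 1) * z2v) ^ (l - i) * z2v ^ i)) := by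
    unfold fn
    simp only [Nat.add_sub_cancel]
    ring
  rw [e]
  exact coeff_q_high h _

lemma van2 (N i l : ℕ) (d : Fin 3 →₀ ℕ) (h : wt d < (N + 1) * N / 2) :
    MvPowerSeries.coeff (R := ℚ) d (Tn N * (C0 * ((qv * z2v) ^ (l - i) * z2v ^ i))) = 0 := by
  have e : Tn N * (C0 * ((qv * z2v) ^ (l - i) * z2v ^ i))
      = qv ^ ((N + 1) * N / 2) * ((-1 : R) ^ N * pochF av (N + 1) * (pochFin N)⁻¹
          * (C0 * ((qv * z2v) ^ (l - i) * z2v ^ i))) := by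
    unfold Tn
    ring
  rw [e]
  exact coeff_q_high h _

/-- The fixed point equation `(A+B) v_∞ = v_∞` for `v_∞ = ∑_{n≥1} fₙ vₙ`,
`vₙ = [1, qⁿz₂, z₂]`: componentwise,
`∑_{n≥1} ((A fₙvₙ)_{i,l} + (B fₙvₙ)_{i,l}) = ∑_{n≥1} fₙ (qⁿz₂)^{l-i} z₂^i`. -/
theorem AB_fixed_point (k : ℕ) (hk : 1 ≤ k) (i l : ℕ) (hil : i ≤ l) (hlk : l ≤ k) :
    sumInf (fun n => Aterm n i l + Bterm n i l) =
      sumInf (fun n => fn n * (qv ^ n * z2v) ^ (l - i) * z2v ^ i) := by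
  funext d
  simp only [sumInf]
  set W := d 0 + d 1 + d 2 with hW
  have hsplit : ∑ n ∈ Finset.range (W + 2), (Aterm (n + 1) i l + Bterm (n + 1) i l)
      = (∑ n ∈ Finset.range (W + 2), fn (n + 2) * (qv ^ (n + 2) * z2v) ^ (l - i) * z2v ^ i)
        + ∑ n ∈ Finset.range (W + 2),
            ((Tn n - Tn (n + 1)) * (C0 * ((qv * z2v) ^ (l - i) * z2v ^ i))) := by
    rw [← Finset.sum_add_distrib]
    exact Finset.sum_congr rfl (fun n _ => by rw [A_eq, B_eq])
  have hTel : ∑ n ∈ Finset.range (W + 2),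
        ((Tn n - Tn (n + 1)) * (C0 * ((qv * z2v) ^ (l - i) * z2v ^ i)))
      = (Tn 0 - Tn (W + 2)) * (C0 * ((qv * z2v) ^ (l - i) * z2v ^ i)) := by
    rw [← Finset.sum_mul, Finset.sum_range_sub' Tn (W + 2)]
  have a1 := Finset.sum_range_succ'
      (fun m => fn (m + 1) * (qv ^ (m + 1) * z2v) ^ (l - i) * z2v ^ i) (W + 2)
  have a2 := Finset.sum_range_succ
      (fun m => fn (m + 1) * (qv ^ (m + 1) * z2v) ^ (l - i) * z2v ^ i) (W + 2)
  have hhalf : wt d < (W + 2 + 1) * (W + 2) / 2 := by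
    unfold wt
    rw [← hW]
    exact half_ge W
  have hz1 : MvPowerSeries.coeff (R := ℚ) d
      (fn (W + 2 + 1) * (qv ^ (W + 2 + 1) * z2v) ^ (l - i) * z2v ^ i) = 0 :=
    van1 (W + 2) i l d hhalf
  have hz2 : MvPowerSeries.coeff (R := ℚ) d
      (Tn (W + 2) * (C0 * ((qv * z2v) ^ (l - i) * z2v ^ i))) = 0 :=
    van2 (W + 2) i l d hhalf
  have hT0 := Tn0 i l
  have main_eq : ∑ n ∈ Finset.range (W + 2), (Aterm (n + 1) i l + Bterm (n + 1) i l)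
      = (∑ n ∈ Finset.range (W + 2), fn (n + 1) * (qv ^ (n + 1) * z2v) ^ (l - i) * z2v ^ i)
        + (fn (W + 2 + 1) * (qv ^ (W + 2 + 1) * z2v) ^ (l - i) * z2v ^ i
            - Tn (W + 2) * (C0 * ((qv * z2v) ^ (l - i) * z2v ^ i))) := by
    rw [hsplit, hTel, sub_mul, hT0]
    linear_combination a2 - a1
  rw [main_eq, map_add, map_sub, hz1, hz2]
  ring

end Boson
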